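/- Let G be a singular digraph on a finite vertex type V with at least 2 vertices and let v ∈ V. If v is a laevo-core vertex then η(G − v) ≤ η(G). If in addition v is a dextro-core vertex, then η(G − v) = η(G) − 1. -/

import Mathlib

open Matrix Finset
open scoped Classical

variable {V : Type*} [Fintype V] [DecidableEq V]
variable {W : Type*} [Fintype W] [DecidableEq W]

/-- Adjacency matrix of a digraph `G` on `V`. -/
noncomputable def adjMat (G : V → V → Prop) : Matrix V V ℝ :=
  Matrix.of fun u v => if G u v then (1 : ℝ) else 0

/-- The kernel of a digraph. -/
def KerD (G : V → V → Prop) : Set (V → ℝ) := {x | (adjMat G).mulVec x = 0}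

/-- The cokernel of a digraph. -/
def CoKerD (G : V → V → Prop) : Set (V → ℝ) := {x | (adjMat G)ᵀ.mulVec x = 0}

/-- A vector is full if it has no zero entries. -/
def Full (x : V → ℝ) : Prop := ∀ v, x v ≠ 0

/-- Dextro-nut digraph: the kernel is one-dimensional, spanned by a full vector. -/
def IsDextroNut (G : V → V → Prop) : Prop :=
  ∃ x ∈ KerD G, Full x ∧ ∀ y ∈ KerD G, ∃ c : ℝ, y = c • x

/-- Laevo-nut digraph: the cokernel is one-dimensional, spanned by a full vector. -/
def IsLaevoNut (G : V → V → Prop) : Prop :=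
  ∃ x ∈ CoKerD G, Full x ∧ ∀ y ∈ CoKerD G, ∃ c : ℝ, y = c • x

/-- Bi-nut digraph: both dextro-nut and laevo-nut. -/
def IsBiNut (G : V → V → Prop) : Prop := IsDextroNut G ∧ IsLaevoNut G

/-- Ambi-nut digraph: one full vector spans both kernel and cokernel. -/
def IsAmbiNut (G : V → V → Prop) : Prop :=
  ∃ x : V → ℝ, Full x ∧ x ∈ KerD G ∧ x ∈ CoKerD G ∧
    (∀ y ∈ KerD G, ∃ c : ℝ, y = c • x) ∧ (∀ y ∈ CoKerD G, ∃ c : ℝ, y = c • x)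

/-- Inter-nut digraph: the intersection of kernel and cokernel is one-dimensional,
spanned by a full vector. -/
def IsInterNut (G : V → V → Prop) : Prop :=
  ∃ x : V → ℝ, Full x ∧ x ∈ KerD G ∩ CoKerD G ∧
    ∀ y ∈ KerD G ∩ CoKerD G, ∃ c : ℝ, y = c • x

/-- Nullity of a digraph: dimension of the kernel of its adjacency matrix. -/
noncomputable def nullityD (G : V → V → Prop) : ℕ :=
  Module.finrank ℝ (LinearMap.ker (adjMat G).mulVecLin)

/-- The digraph obtained by deleting vertex `v`. -/
def delV (G : V → V → Prop) (v : V) : {u : V // u ≠ v} → {u : V // u ≠ v} → Prop :=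
  fun a b => G a.1 b.1

/-- Extension by zero at `v`. -/
noncomputable def extMap (v : V) : ({u : V // u ≠ v} → ℝ) →ₗ[ℝ] (V → ℝ) where
  toFun z w := if h : w = v then 0 else z ⟨w, h⟩
  map_add' a b := by funext w; by_cases h : w = v <;> simp [h]
  map_smul' c a := by funext w; by_cases h : w = v <;> simp [h]

lemma extMap_apply_ne (v : V) (z : {u : V // u ≠ v} → ℝ) (w : V) (h : w ≠ v) :
    extMap v z w = z ⟨w, h⟩ := by
  simp [extMap, h]

lemma extMap_apply_self (v : V) (z : {u : V // u ≠ v} → ℝ) : extMap v z v = 0 := by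
  simp [extMap]

lemma extMap_injective (v : V) : Function.Injective (extMap v) := by
  intro a b h
  funext w
  have := congrFun h w.1
  rwa [extMap_apply_ne v a w.1 w.2, extMap_apply_ne v b w.1 w.2] at this

lemma restrict_ext (v : V) (x : V → ℝ) (hxv : x v = 0) :
    extMap v (fun u => x u.1) = x := by
  funext w
  by_cases h : w = v
  · rw [h, extMap_apply_self, hxv]
  · rw [extMap_apply_ne v _ w h]

lemma mulVec_ext (G : V → V → Prop) (v : V) (z : {u : V // u ≠ v} → ℝ)
    (u : V) (hu : u ≠ v) :
    (adjMat G).mulVec (extMap v z) u = (adjMat (delV G v)).mulVec z ⟨u, hu⟩ := by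
  unfold Matrix.mulVec dotProduct
  rw [Fintype.sum_eq_add_sum_compl v, extMap_apply_self, mul_zero, zero_add,
    Finset.sum_subtype (p := fun w => w ≠ v) _ (by simp)]
  refine Finset.sum_congr rfl fun w _ => ?_
  rw [extMap_apply_ne v z w.1 w.2]
  congr 1

lemma ext_mem_ker (G : V → V → Prop) (v : V) {y : V → ℝ}
    (hy : (adjMat G)ᵀ.mulVec y = 0) (hyv : y v ≠ 0)
    (z : {u : V // u ≠ v} → ℝ) (hz : (adjMat (delV G v)).mulVec z = 0) :
    (adjMat G).mulVec (extMap v z) = 0 := by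
  have hrow : ∀ u, u ≠ v → (adjMat G).mulVec (extMap v z) u = 0 := by
    intro u hu
    rw [mulVec_ext G v z u hu, hz]
    rfl
  have hdot : y ⬝ᵥ (adjMat G).mulVec (extMap v z) = 0 := by
    rw [Matrix.dotProduct_mulVec, ← Matrix.mulVec_transpose, hy]
    simp [dotProduct]
  have hv : y v * (adjMat G).mulVec (extMap v z) v = 0 := by
    have h2 := hdot
    unfold dotProduct at h2
    rwa [Finset.sum_eq_single v (fun u _ hu => by rw [hrow u hu, mul_zero])
      (fun h => absurd (Finset.mem_univ v) h)] at h2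
  funext u
  by_cases h : u = v
  · subst h
    simpa using (mul_eq_zero.mp hv).resolve_left hyv
  · exact hrow u h

set_option maxHeartbeats 1000000 in
set_option synthInstance.maxHeartbeats 400000 in
theorem stmt3 (G : V → V → Prop) (hcard : 2 ≤ Fintype.card V)
    (hsing : 0 < nullityD G) (v : V) (hlaevo : ∃ x ∈ CoKerD G, x v ≠ 0) :
    nullityD (delV G v) ≤ nullityD G ∧
    ((∃ x ∈ KerD G, x v ≠ 0) → nullityD (delV G v) = nullityD G - 1) := by
  obtain ⟨y, hy, hyv⟩ := hlaevo
  set K := LinearMap.ker (adjMat G).mulVecLin with hK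
  set K' := LinearMap.ker (adjMat (delV G v)).mulVecLin with hK'
  have hψmem : ∀ z : K', extMap v z.1 ∈ K := by
    intro z
    rw [LinearMap.mem_ker, Matrix.mulVecLin_apply]
    have h2 : (adjMat (delV G v)).mulVecLin z.1 = 0 := z.2
    rw [Matrix.mulVecLin_apply] at h2
    exact ext_mem_ker G v hy hyv z.1 h2
  let ψ : K' →ₗ[ℝ] K := ((extMap v).comp K'.subtype).codRestrict K hψmem
  have hψinj : Function.Injective ψ := by
    intro a b h
    have : extMap v a.1 = extMap v b.1 := congrArg Subtype.val h
    exact Subtype.ext (extMap_injective v this)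
  constructor
  · exact LinearMap.finrank_le_finrank_of_injective hψinj
  · rintro ⟨x, hx, hxv⟩
    have hxK : x ∈ K := by
      rw [LinearMap.mem_ker, Matrix.mulVecLin_apply]; exact hx
    let ev : K →ₗ[ℝ] ℝ := (LinearMap.proj v).comp K.subtype
    have hψev : ∀ z : K', ψ z ∈ LinearMap.ker ev := by
      intro z
      simp only [LinearMap.mem_ker]
      show (ψ z).1 v = 0
      exact extMap_apply_self v z.1
    let ψ' : K' →ₗ[ℝ] LinearMap.ker ev := ψ.codRestrict (LinearMap.ker ev) hψev
    have hbij : Function.Bijective ψ' := by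
      constructor
      · intro a b h
        exact hψinj (Subtype.ext (congrArg (fun t => t.1.1) h))
      · rintro ⟨⟨w, hwK⟩, hw0⟩
        have hw0' : w v = 0 := hw0
        have hz : (fun u : {u : V // u ≠ v} => w u.1) ∈ K' := by
          rw [LinearMap.mem_ker, Matrix.mulVecLin_apply]
          funext u
          have := mulVec_ext G v (fun u : {u : V // u ≠ v} => w u.1) u.1 u.2
          rw [restrict_ext v w hw0'] at this
          have hwker : (adjMat G).mulVec w = 0 := by
            simpa [hK, Matrix.mulVecLin_apply] using hwK
          rw [← this, hwker]
          rfl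
        refine ⟨⟨_, hz⟩, ?_⟩
        apply Subtype.ext; apply Subtype.ext
        show extMap v (fun u : {u : V // u ≠ v} => w u.1) = w
        exact restrict_ext v w hw0'
    have hfr : Module.finrank ℝ K' = Module.finrank ℝ (LinearMap.ker ev) :=
      (LinearEquiv.ofBijective ψ' hbij).finrank_eq
    have hsurj : Function.Surjective ev := by
      intro r
      refine ⟨(r / x v) • ⟨x, hxK⟩, ?_⟩
      show (r / x v) * x v = r
      field_simp
    have hrange : LinearMap.range ev = ⊤ := LinearMap.range_eq_top.mpr hsurj
    have hrn : Module.finrank ℝ (LinearMap.range ev) + Module.finrank ℝ (LinearMap.ker ev)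
        = Module.finrank ℝ K := LinearMap.finrank_range_add_finrank_ker ev
    rw [hrange, finrank_top, Module.finrank_self] at hrn
    show Module.finrank ℝ K' = Module.finrank ℝ K - 1
    omega
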